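/- Let 0 < a < b < 1 and let c₁, c₂ be real numbers such that c₁ψ'(a) + c₂φ'(a) < 0 and c₁ψ'(b) + c₂φ'(b) > 0. Then c₁ > 0 and c₂ > 0. -/

import Mathlib

open Real

/-- First derivative of `p ↦ p^m (1-p)^(1-m)`. -/
lemma aux_hasDerivAt₁ (m p : ℝ) (hp : 0 < p) (hp1 : p < 1) :
    HasDerivAt (fun x : ℝ => x ^ m * (1 - x) ^ (1 - m))
      (p ^ (m - 1) * (1 - p) ^ (-m) * (m - p)) p := by
  have h1p : (0:ℝ) < 1 - p := by linarith
  have h1 : HasDerivAt (fun x : ℝ => x ^ m) (m * p ^ (m - 1)) p :=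
    Real.hasDerivAt_rpow_const (Or.inl hp.ne')
  have h2' : HasDerivAt (fun x : ℝ => (1 - x)) (-1) p := by
    simpa using (hasDerivAt_id p).const_sub 1
  have h2 : HasDerivAt (fun x : ℝ => (1 - x) ^ (1 - m))
      (((1 - m) * (1 - p) ^ (1 - m - 1)) * (-1)) p := by
    exact (Real.hasDerivAt_rpow_const (p := 1 - m) (Or.inl h1p.ne')).comp p h2'
  have h3 := h1.mul h2
  refine h3.congr_deriv ?_
  have e1 : p ^ m = p ^ (m - 1) * p := by
    rw [← Real.rpow_add_one hp.ne' (m - 1)]; ring_nf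
  have e2 : (1 - p) ^ (1 - m) = (1 - p) ^ (-m) * (1 - p) := by
    rw [← Real.rpow_add_one h1p.ne' (-m)]; ring_nf
  have e3 : (1 - p) ^ (1 - m - 1) = (1 - p) ^ (-m) := by rw [show 1 - m - 1 = -m by ring]
  rw [e1, e2, e3]; ring

/-- Second derivative: derivative of `p ↦ p^(m-1) (1-p)^(-m) (m-p)`. -/
lemma aux_hasDerivAt₂ (m p : ℝ) (hp : 0 < p) (hp1 : p < 1) :
    HasDerivAt (fun x : ℝ => x ^ (m - 1) * (1 - x) ^ (-m) * (m - x))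
      (m * (m - 1) * (p ^ (m - 2) * (1 - p) ^ (-m - 1))) p := by
  have h1p : (0:ℝ) < 1 - p := by linarith
  have h1 : HasDerivAt (fun x : ℝ => x ^ (m - 1)) ((m - 1) * p ^ (m - 1 - 1)) p :=
    Real.hasDerivAt_rpow_const (Or.inl hp.ne')
  have h2' : HasDerivAt (fun x : ℝ => (1 - x)) (-1) p := by
    simpa using (hasDerivAt_id p).const_sub 1
  have h2 : HasDerivAt (fun x : ℝ => (1 - x) ^ (-m))
      ((-m * (1 - p) ^ (-m - 1)) * (-1)) p :=
    (Real.hasDerivAt_rpow_const (p := -m) (Or.inl h1p.ne')).comp p h2'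
  have h4' : HasDerivAt (fun x : ℝ => (m - x)) (-1) p := by
    simpa using (hasDerivAt_id p).const_sub m
  have h5 := (h1.mul h2).mul h4'
  refine h5.congr_deriv ?_
  have e1 : p ^ (m - 1) = p ^ (m - 2) * p := by
    rw [← Real.rpow_add_one hp.ne' (m - 2)]; ring_nf
  have e2 : (1 - p) ^ (-m) = (1 - p) ^ (-m - 1) * (1 - p) := by
    rw [← Real.rpow_add_one h1p.ne' (-m - 1)]; ring_nf
  have e3 : p ^ (m - 1 - 1) = p ^ (m - 2) := by rw [show m - 1 - 1 = m - 2 by ring]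
  simp only [Pi.mul_apply]; rw [e1, e2, e3]; ring

/-- The derivative function is strictly monotone on `(0,1)` when `m(m-1) > 0`. -/
lemma aux_mono (m : ℝ) (hm : 0 < m * (m - 1)) :
    StrictMonoOn (fun p : ℝ => p ^ (m - 1) * (1 - p) ^ (-m) * (m - p)) (Set.Ioo 0 1) := by
  apply strictMonoOn_of_deriv_pos (convex_Ioo 0 1)
  · intro x hx
    exact (aux_hasDerivAt₂ m x hx.1 hx.2).continuousAt.continuousWithinAt
  · intro x hx
    rw [interior_Ioo] at hx
    rw [(aux_hasDerivAt₂ m x hx.1 hx.2).deriv]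
    have h1 : (0:ℝ) < x ^ (m - 2) := Real.rpow_pos_of_pos hx.1 _
    have h2 : (0:ℝ) < (1 - x) ^ (-m - 1) := Real.rpow_pos_of_pos (by linarith [hx.2]) _
    exact mul_pos hm (mul_pos h1 h2)

/-- If `0 < a < b < 1` and `c₁ψ'(a) + c₂φ'(a) < 0` while `c₁ψ'(b) + c₂φ'(b) > 0`,
then `c₁ > 0` and `c₂ > 0`. -/
theorem stmt_6 (h ℓ σ α γ : ℝ) (hh : 0 < h) (hℓ : ℓ < 0) (hσ : 0 < σ) (hα : 0 < α)
    (hγ : γ = Real.sqrt (1 + 8 * α * σ ^ 2 / (h - ℓ) ^ 2))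
    (ψ φ : ℝ → ℝ)
    (hψ : ∀ p : ℝ, ψ p = p ^ ((1 + γ) / 2) * (1 - p) ^ ((1 - γ) / 2))
    (hφ : ∀ p : ℝ, φ p = p ^ ((1 - γ) / 2) * (1 - p) ^ ((1 + γ) / 2))
    (a b c₁ c₂ : ℝ) (ha : 0 < a) (hab : a < b) (hb : b < 1)
    (hlow : c₁ * deriv ψ a + c₂ * deriv φ a < 0)
    (hhigh : c₁ * deriv ψ b + c₂ * deriv φ b > 0) :
    0 < c₁ ∧ 0 < c₂ := by
  -- γ > 1
  have hγ1 : 1 < γ := by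
    rw [hγ]
    have hhl : (0:ℝ) < (h - ℓ) ^ 2 := by nlinarith
    have hX : (1:ℝ) < 1 + 8 * α * σ ^ 2 / (h - ℓ) ^ 2 := by
      have : (0:ℝ) < 8 * α * σ ^ 2 / (h - ℓ) ^ 2 := by positivity
      linarith
    calc (1:ℝ) = Real.sqrt 1 := by simp
      _ < _ := by
        apply Real.sqrt_lt_sqrt (by norm_num) hX
  set m₁ : ℝ := (1 + γ) / 2 with hm₁
  set m₂ : ℝ := (1 - γ) / 2 with hm₂
  have hψf : ψ = fun p : ℝ => p ^ m₁ * (1 - p) ^ (1 - m₁) := by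
    funext p
    rw [hψ p]
    congr 1
    norm_num [hm₁, hm₂]
    ring
  have hφf : φ = fun p : ℝ => p ^ m₂ * (1 - p) ^ (1 - m₂) := by
    funext p
    rw [hφ p]
    congr 1
    norm_num [hm₁, hm₂]
    ring
  set g₁ : ℝ → ℝ := fun p => p ^ (m₁ - 1) * (1 - p) ^ (-m₁) * (m₁ - p) with hg₁
  set g₂ : ℝ → ℝ := fun p => p ^ (m₂ - 1) * (1 - p) ^ (-m₂) * (m₂ - p) with hg₂
  have hb0 : 0 < b := lt_trans ha hab
  have ha1 : a < 1 := lt_trans hab hb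
  have hderivψ : ∀ p : ℝ, 0 < p → p < 1 → deriv ψ p = g₁ p := by
    intro p hp hp1
    rw [hψf]
    exact (aux_hasDerivAt₁ m₁ p hp hp1).deriv
  have hderivφ : ∀ p : ℝ, 0 < p → p < 1 → deriv φ p = g₂ p := by
    intro p hp hp1
    rw [hφf]
    exact (aux_hasDerivAt₁ m₂ p hp hp1).deriv
  -- sign facts
  have hg₁pos : ∀ p : ℝ, 0 < p → p < 1 → 0 < g₁ p := by
    intro p hp hp1
    have h1 : (0:ℝ) < p ^ (m₁ - 1) := Real.rpow_pos_of_pos hp _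
    have h2 : (0:ℝ) < (1 - p) ^ (-m₁) := Real.rpow_pos_of_pos (by linarith) _
    have h3 : 0 < m₁ - p := by rw [hm₁]; linarith
    positivity
  have hg₂neg : ∀ p : ℝ, 0 < p → p < 1 → g₂ p < 0 := by
    intro p hp hp1
    have h1 : (0:ℝ) < p ^ (m₂ - 1) := Real.rpow_pos_of_pos hp _
    have h2 : (0:ℝ) < (1 - p) ^ (-m₂) := Real.rpow_pos_of_pos (by linarith) _
    have h3 : m₂ - p < 0 := by rw [hm₂]; linarith
    have h4 := mul_pos h1 h2
    have : g₂ p = p ^ (m₂ - 1) * (1 - p) ^ (-m₂) * (m₂ - p) := rfl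
    rw [this]
    exact mul_neg_of_pos_of_neg h4 h3
  -- monotonicity
  have hmono₁ : g₁ a < g₁ b := by
    apply aux_mono m₁ (by rw [hm₁]; nlinarith) ⟨ha, ha1⟩ ⟨hb0, hb⟩ hab
  have hmono₂ : g₂ a < g₂ b := by
    apply aux_mono m₂ (by rw [hm₂]; nlinarith) ⟨ha, ha1⟩ ⟨hb0, hb⟩ hab
  rw [hderivψ a ha ha1, hderivφ a ha ha1] at hlow
  rw [hderivψ b hb0 hb, hderivφ b hb0 hb] at hhigh
  have hA1 := hg₁pos a ha ha1
  have hB1 := hg₁pos b hb0 hb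
  have hA2 := hg₂neg a ha ha1
  have hB2 := hg₂neg b hb0 hb
  -- final algebra
  have hc₂ : 0 < c₂ := by
    by_contra hc
    push_neg at hc
    have h1 : 0 ≤ c₂ * g₂ a := by nlinarith
    have hc₁ : c₁ < 0 := by nlinarith
    have : c₁ * g₁ b ≤ c₁ * g₁ a := by nlinarith
    have : c₂ * g₂ b ≤ c₂ * g₂ a := by nlinarith
    linarith
  refine ⟨?_, hc₂⟩
  by_contra hc
  push_neg at hc
  have h1 : c₁ * g₁ b ≤ 0 := mul_nonpos_of_nonpos_of_nonneg hc hB1.le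
  have h2 : c₂ * g₂ b < 0 := mul_neg_of_pos_of_neg hc₂ hB2
  linarith
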